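/- Let 𝔗 be a BHT of a signal ((V,E), f) over a finite connected graph. For every non-root vertex v, there exists a path in G from v to its linking vertex 𝔏(v) such that the signal value of every vertex on the path lies in the closed interval [f(v), f(𝔏(v))]. -/

import Mathlib

open scoped Classical

/-- A (multi)graph given by source and target maps on an edge type. -/
structure BHTGraph (V E : Type*) where
  src : E → V
  tgt : E → V

namespace BHTGraph

variable {V E : Type*} (G : BHTGraph V E)

/-- `e` is an edge joining `x` and `y`. -/
def Ends (e : E) (x y : V) : Prop :=
  (G.src e = x ∧ G.tgt e = y) ∨ (G.src e = y ∧ G.tgt e = x)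

/-- The graph is connected. -/
def Connected : Prop :=
  ∀ a b : V, Relation.ReflTransGen (fun x y => ∃ e, G.Ends e x y) a b

/-- Extension of a vertex signal to vertices and edges, `f(e) = max f(V(e))`. -/
def sig (f : V → ℝ) : V ⊕ E → ℝ
  | .inl v => f v
  | .inr e => max (f (G.src e)) (f (G.tgt e))

/-- `pos` realizes a `G`-ordering: a total ordering of `V ⊕ E` along which the
signal is nondecreasing and every vertex precedes each edge incident to it. -/
def IsGOrdering (f : V → ℝ) (pos : V ⊕ E → ℕ) : Prop :=
  Function.Injective pos ∧
  (∀ a b, pos a ≤ pos b → G.sig f a ≤ G.sig f b) ∧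
  (∀ e : E, pos (.inl (G.src e)) < pos (.inr e) ∧ pos (.inl (G.tgt e)) < pos (.inr e))

/-- Connectivity within the subgraph `G_{<k}` of elements with position `< k`. -/
def ConnB (pos : V ⊕ E → ℕ) (k : ℕ) (a b : V) : Prop :=
  pos (.inl a) < k ∧ pos (.inl b) < k ∧
    Relation.ReflTransGen (fun x y => ∃ e, pos (.inr e) < k ∧ G.Ends e x y) a b

/-- `m` is the `≺`-minimum of the connected component of `v` in `G_{<k}`. -/
def IsCompMin (pos : V ⊕ E → ℕ) (k : ℕ) (m v : V) : Prop :=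
  G.ConnB pos k m v ∧ ∀ w, G.ConnB pos k v w → pos (.inl m) ≤ pos (.inl w)

/-- The `≺`-maximal endpoint of an edge. -/
def maxEnd (pos : V ⊕ E → ℕ) (e : E) : V :=
  if pos (.inl (G.src e)) ≤ pos (.inl (G.tgt e)) then G.tgt e else G.src e

/-- `(p, L)` is a basin hierarchy tree of the signal `(G, f)` with respect to the
`G`-ordering `pos`, rooted at the `≺`-minimal vertex `r`, with linking-vertex map `L`. -/
structure IsBHT (f : V → ℝ) (pos : V ⊕ E → ℕ) (r : V) (p : V → V) (L : V → V) : Prop where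
  ordering : G.IsGOrdering f pos
  root_min : ∀ v, pos (.inl r) ≤ pos (.inl v)
  root_fix : p r = r
  reaches : ∀ v, ∃ n, p^[n] v = r
  spec : ∀ v, v ≠ r → ∃ e : E,
    G.IsCompMin pos (pos (.inr e)) v v ∧
    G.IsCompMin pos (pos (.inr e) + 1) (p v) v ∧
    L v = G.maxEnd pos e

end BHTGraph

/-- `u` is an ancestor of `v` in the tree with parent map `p` (`u ⪯_T v`). -/
def Anc {V : Type*} (p : V → V) (u v : V) : Prop := ∃ n, p^[n] v = u

/-- `f(𝔏(v))`, with value `+∞` at the root. -/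
noncomputable def fLink {V : Type*} (f : V → ℝ) (r : V) (L : V → V) (v : V) : EReal :=
  if v = r then ⊤ else (f (L v) : EReal)

/-- The persistence `pers(v) = f(𝔏(v)) - f(v)` of a vertex in a BHT. -/
noncomputable def persBHT {V : Type*} (f : V → ℝ) (r : V) (L : V → V) (v : V) : EReal :=
  fLink f r L v - (f v : EReal)

namespace BHTGraph

variable {V E : Type*} (G : BHTGraph V E)

/-- The component of `v` dies at the edge `e`: `v` is the minimum of its component
just before `e` is added, and no longer after. -/
def DiesAt (pos : V ⊕ E → ℕ) (v : V) (e : E) : Prop :=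
  G.IsCompMin pos (pos (.inr e)) v v ∧ ¬ G.IsCompMin pos (pos (.inr e) + 1) v v

/-- The death value of the component created by `v` (`+∞` if permanent). -/
noncomputable def deathVal (f : V → ℝ) (pos : V ⊕ E → ℕ) (v : V) : EReal :=
  if h : ∃ e, G.DiesAt pos v e then ((G.sig f (.inr h.choose) : ℝ) : EReal) else ⊤

/-- The degree-0 persistence diagram of `(G, f)`, as a multiset of intervals
`[birth, death)` (including trivial intervals). -/
noncomputable def PD0 [Fintype V] (f : V → ℝ) (pos : V ⊕ E → ℕ) : Multiset (EReal × EReal) :=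
  Finset.univ.val.map fun v : V => ((f v : EReal), G.deathVal f pos v)

end BHTGraph

/-- The nontrivial part of a multiset of intervals. -/
noncomputable def nontriv (M : Multiset (EReal × EReal)) : Multiset (EReal × EReal) :=
  M.filter fun ab => ab.1 < ab.2

/-- The 0-low-persistence filter associated to a BHT `(p, L)` rooted at `r`. -/
noncomputable def LPF {V : Type*} [Fintype V] (f : V → ℝ) (r : V) (p L : V → V)
    (ε : ℝ) (v : V) : ℝ :=
  (insert (f v) ((Finset.univ.filter fun u => Anc p u v ∧ persBHT f r L u < (ε : EReal)).image
    fun u => f (L u))).max' (Finset.insert_nonempty _ _)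

/-- For every non-root vertex `v` of a Basin Hierarchy Tree there is a path in the
graph from `v` to its linking vertex `𝔏(v)` all of whose vertices have signal
values in the closed interval `[f(v), f(𝔏(v))]`. -/
theorem bht_path_to_link {V E : Type*} [Fintype V] [Fintype E]
    (G : BHTGraph V E) (hG : G.Connected) (f : V → ℝ) (pos : V ⊕ E → ℕ)
    (r : V) (p L : V → V) (hbht : G.IsBHT f pos r p L) :
    ∀ v, v ≠ r →
      Relation.ReflTransGen
        (fun x y => (∃ e, G.Ends e x y) ∧
          f x ∈ Set.Icc (f v) (f (L v)) ∧ f y ∈ Set.Icc (f v) (f (L v)))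
        v (L v) := by
  intro v hv
  obtain ⟨e, hmin, hpmin, hL⟩ := hbht.spec v hv
  obtain ⟨hinj, hmono, hinc⟩ := hbht.ordering
  set k := pos (.inr e) with hk
  have hmonoV : ∀ a b : V, pos (.inl a) ≤ pos (.inl b) → f a ≤ f b := by
    intro a b h
    simpa [BHTGraph.sig] using hmono (.inl a) (.inl b) h
  have hmaxf : f (G.maxEnd pos e) = max (f (G.src e)) (f (G.tgt e)) := by
    unfold BHTGraph.maxEnd
    split
    · next h => exact (max_eq_right (hmonoV _ _ h)).symm
    · next h => exact (max_eq_left (hmonoV _ _ (le_of_not_ge h))).symm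
  have hub : ∀ w : V, pos (.inl w) < k → f w ≤ f (G.maxEnd pos e) := by
    intro w hw
    rw [hmaxf]
    simpa [BHTGraph.sig] using hmono (.inl w) (.inr e) (le_of_lt hw)
  have hvk : pos (.inl v) < k := hmin.1.1
  have hlb : ∀ w, G.ConnB pos k v w → f v ≤ f w := fun w hw =>
    hmonoV _ _ (hmin.2 w hw)
  have key : ∀ b, Relation.ReflTransGen
      (fun x y => ∃ e', pos (.inr e') < k ∧ G.Ends e' x y) v b →
      G.ConnB pos k v b ∧
      Relation.ReflTransGen
        (fun x y => (∃ e0, G.Ends e0 x y) ∧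
          f x ∈ Set.Icc (f v) (f (G.maxEnd pos e)) ∧
          f y ∈ Set.Icc (f v) (f (G.maxEnd pos e))) v b := by
    intro b hb
    induction hb with
    | refl => exact ⟨⟨hvk, hvk, .refl⟩, .refl⟩
    | @tail c b hvc hcb ih =>
      obtain ⟨e', he'k, hE⟩ := hcb
      have hbk : pos (.inl b) < k := by
        rcases hE with ⟨hs, ht⟩ | ⟨hs, ht⟩
        · rw [← ht]; exact lt_trans (hinc e').2 he'k
        · rw [← hs]; exact lt_trans (hinc e').1 he'k
      have hcb' : G.ConnB pos k v b := ⟨hvk, hbk, ih.1.2.2.tail ⟨e', he'k, hE⟩⟩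
      exact ⟨hcb', ih.2.tail ⟨⟨e', hE⟩, ⟨hlb c ih.1, hub c ih.1.2.1⟩,
        ⟨hlb b hcb', hub b hbk⟩⟩⟩
  have hpv_ne : p v ≠ v := by
    obtain ⟨n, hn⟩ := hbht.reaches v
    intro h
    rw [Function.iterate_fixed h] at hn
    exact hv hn
  have hconnvv1 : G.ConnB pos (k + 1) v v :=
    ⟨Nat.lt_succ_of_lt hvk, Nat.lt_succ_of_lt hvk, .refl⟩
  have hpv_lt : pos (.inl (p v)) < pos (.inl v) :=
    lt_of_le_of_ne (hpmin.2 v hconnvv1) fun h => hpv_ne (Sum.inl_injective (hinj h))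
  have hpv_not : ¬ G.ConnB pos k v (p v) := fun h =>
    absurd (hmin.2 _ h) (not_le.mpr hpv_lt)
  have hrtg : Relation.ReflTransGen
      (fun x y => ∃ e', pos (.inr e') < k + 1 ∧ G.Ends e' x y) v (p v) := by
    have hsymm : Symmetric (fun x y => ∃ e', pos (.inr e') < k + 1 ∧ G.Ends e' x y) := by
      rintro x y ⟨e', h1, h2⟩
      refine ⟨e', h1, ?_⟩
      rcases h2 with h | h
      · exact Or.inr h
      · exact Or.inl h
    haveI : Std.Symm (fun x y => ∃ e', pos (.inr e') < k + 1 ∧ G.Ends e' x y) := ⟨fun a b h => hsymm h⟩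
    exact Relation.ReflTransGen.symmetric.symm _ _ hpmin.1.2.2
  have extract : ∀ b, Relation.ReflTransGen
      (fun x y => ∃ e', pos (.inr e') < k + 1 ∧ G.Ends e' x y) v b →
      G.ConnB pos k v b ∨ (G.ConnB pos k v (G.src e) ∨ G.ConnB pos k v (G.tgt e)) := by
    intro b hb
    induction hb with
    | refl => exact Or.inl ⟨hvk, hvk, .refl⟩
    | @tail c b hvc hcb ih =>
      obtain ⟨e', he'k, hE⟩ := hcb
      rcases ih with hc | hr
      · by_cases h : pos (.inr e') < k
        · refine Or.inl ⟨hvk, ?_, hc.2.2.tail ⟨e', h, hE⟩⟩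
          rcases hE with ⟨hs, ht⟩ | ⟨hs, ht⟩
          · rw [← ht]; exact lt_trans (hinc e').2 h
          · rw [← hs]; exact lt_trans (hinc e').1 h
        · have he : e' = e := by
            have hpe : pos (.inr e') = pos (.inr e) := by omega
            exact Sum.inr_injective (hinj hpe)
          subst he
          rcases hE with ⟨hs, ht⟩ | ⟨hs, ht⟩
          · exact Or.inr (Or.inl (by rw [hs]; exact hc))
          · exact Or.inr (Or.inr (by rw [ht]; exact hc))
      · exact Or.inr hr
  rcases extract _ hrtg with hc | hend
  · exact absurd hc hpv_not
  · rw [hL]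
    by_cases hif : pos (.inl (G.src e)) ≤ pos (.inl (G.tgt e))
    · have hme : G.maxEnd pos e = G.tgt e := by unfold BHTGraph.maxEnd; rw [if_pos hif]
      rw [hme] at hub key ⊢
      rcases hend with hsrc | htgt
      · exact ((key _ hsrc.2.2).2).tail
          ⟨⟨e, Or.inl ⟨rfl, rfl⟩⟩,
           ⟨hlb _ hsrc, hub _ hsrc.2.1⟩,
           ⟨hmonoV v _ (le_trans (hmin.2 _ hsrc) hif), le_refl _⟩⟩
      · exact (key _ htgt.2.2).2
    · have hme : G.maxEnd pos e = G.src e := by unfold BHTGraph.maxEnd; rw [if_neg hif]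
      rw [hme] at hub key ⊢
      rcases hend with hsrc | htgt
      · exact (key _ hsrc.2.2).2
      · exact ((key _ htgt.2.2).2).tail
          ⟨⟨e, Or.inr ⟨rfl, rfl⟩⟩,
           ⟨hlb _ htgt, hub _ htgt.2.1⟩,
           ⟨hmonoV v _ (le_trans (hmin.2 _ htgt) (le_of_not_ge hif)), le_refl _⟩⟩
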